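/- Let μ ≥ 2 be an even integer, ψ ∈ (0, 2π) with t := 3/4 − ψ/(2π) such that tμ is not an integer, and let k_low = ⌈tμ⌉ + 1 and k_up = ⌊(5/4 − ψ/(2π))μ⌋ + 1. Then Σ_{k = k_low}^{k_up} cos(ψ + (2π/μ)(k−1)) = −sin(ψ − π/μ + (2π/μ)⌈tμ⌉) / sin(π/μ). Consequently, for any W ≥ 1 integer, ζ > 0 and V = sin(π/μ)/W, the squared aggregated signal α_I := ζ·[W·Σ_{k = k_low}^{k_up} cos(ψ + (2π/μ)(k−1))]² satisfies α_I = ζ·cos²(−2πt − π/μ + (2π/μ)⌈tμ⌉) / V². -/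

import Mathlib

open Real Finset

lemma sum_cos_mul (θ δ : ℝ) : ∀ N : ℕ,
    (∑ j ∈ Finset.range N, Real.cos (θ + j * δ)) * (2 * Real.sin (δ / 2))
      = Real.sin (θ + N * δ - δ / 2) - Real.sin (θ - δ / 2) := by
  intro N
  induction N with
  | zero => simp
  | succ n ih =>
    rw [Finset.sum_range_succ, add_mul, ih]
    have h1 : θ + (↑(n+1) : ℝ) * δ - δ / 2 = (θ + n * δ) + δ / 2 := by push_cast; ring
    have h2 : θ + (n : ℝ) * δ - δ / 2 = (θ + n * δ) - δ / 2 := by ring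
    rw [h1, h2, Real.sin_add, Real.sin_sub]
    ring

lemma sum_Icc_shift (f : ℤ → ℝ) (m : ℤ) : ∀ N : ℕ,
    ∑ k ∈ Finset.Icc (m + 1) (m + (N : ℤ)), f k = ∑ j ∈ Finset.range N, f (m + 1 + j) := by
  intro N
  induction N with
  | zero => simp
  | succ n ih =>
    push_cast
    rw [show m + ((n:ℤ) + 1) = m + (n:ℤ) + 1 from by ring]
    have hins : Finset.Icc (m + 1) (m + (n : ℤ) + 1)
        = insert (m + (n : ℤ) + 1) (Finset.Icc (m + 1) (m + (n : ℤ))) := by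
      ext x
      simp only [Finset.mem_Icc, Finset.mem_insert]
      omega
    rw [hins, Finset.sum_insert (by simp [Finset.mem_Icc]), ih, Finset.sum_range_succ,
      show m + (n:ℤ) + 1 = m + 1 + (n:ℤ) from by ring]
    exact add_comm _ _

theorem cuma_signal_power_closed_form (μ W : ℕ) (hμ2 : 2 ≤ μ) (hμe : Even μ) (hW : 1 ≤ W)
    (ψ : ℝ) (hψ0 : 0 < ψ) (hψ2 : ψ < 2 * π)
    (t : ℝ) (ht : t = 3 / 4 - ψ / (2 * π))
    (hni : ∀ n : ℤ, t * μ ≠ (n : ℝ))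
    (ζ V : ℝ) (hζ : 0 < ζ) (hV : V = Real.sin (π / μ) / W) :
    (∑ k ∈ Finset.Icc (⌈t * μ⌉ + 1) (⌊(5 / 4 - ψ / (2 * π)) * μ⌋ + 1),
        Real.cos (ψ + 2 * π / μ * ((k : ℝ) - 1))
      = -Real.sin (ψ - π / μ + 2 * π / μ * (⌈t * μ⌉ : ℝ)) / Real.sin (π / μ))
    ∧ ζ * ((W : ℝ) *
          ∑ k ∈ Finset.Icc (⌈t * μ⌉ + 1) (⌊(5 / 4 - ψ / (2 * π)) * μ⌋ + 1),
            Real.cos (ψ + 2 * π / μ * ((k : ℝ) - 1))) ^ 2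
      = ζ * Real.cos (-(2 * π * t) - π / μ + 2 * π / μ * (⌈t * μ⌉ : ℝ)) ^ 2 / V ^ 2 := by
  have hπ : (0:ℝ) < π := Real.pi_pos
  obtain ⟨N, hNμ⟩ := hμe
  have hμ0 : (0:ℝ) < μ := by positivity
  have hμR : (μ : ℝ) = 2 * N := by rw [hNμ]; push_cast; ring
  have hN1 : 1 ≤ N := by omega
  -- floor / ceil arithmetic
  set m : ℤ := ⌈t * μ⌉ with hm
  have hx : (5 / 4 - ψ / (2 * π)) * (μ : ℝ) = t * μ + ((N : ℤ) : ℝ) := by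
    rw [ht, hμR]; push_cast; ring
  have hfloor : ⌊(5 / 4 - ψ / (2 * π)) * (μ : ℝ)⌋ = ⌊t * (μ : ℝ)⌋ + N := by
    rw [hx, Int.floor_add_intCast]
  have hlt : (⌊t * (μ : ℝ)⌋ : ℝ) < t * μ :=
    lt_of_le_of_ne (Int.floor_le _) (fun h => hni _ h.symm)
  have hceil : m = ⌊t * (μ : ℝ)⌋ + 1 := by
    have h1 : m ≤ ⌊t * (μ : ℝ)⌋ + 1 := Int.ceil_le_floor_add_one _
    have h2 : ⌊t * (μ : ℝ)⌋ < m := by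
      have := Int.le_ceil (t * (μ : ℝ))
      exact_mod_cast hlt.trans_le this
    omega
  have hub : ⌊(5 / 4 - ψ / (2 * π)) * (μ : ℝ)⌋ + 1 = m + N := by omega
  -- rewrite the sum
  set δ : ℝ := 2 * π / μ with hδ
  set θ : ℝ := ψ + δ * (m : ℝ) with hθ
  have hsin : 0 < Real.sin (π / μ) := by
    apply Real.sin_pos_of_pos_of_lt_pi
    · positivity
    · rw [div_lt_iff₀ hμ0]
      have h2 : (2:ℝ) ≤ (μ:ℝ) := by exact_mod_cast hμ2
      nlinarith
  have hδ2 : δ / 2 = π / μ := by rw [hδ]; ring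
  have hNδ : (N : ℝ) * δ = π := by
    rw [hδ]; field_simp [hμR]; rw [hμR]; ring
  have hsum : ∑ k ∈ Finset.Icc (m + 1) (⌊(5 / 4 - ψ / (2 * π)) * (μ:ℝ)⌋ + 1),
      Real.cos (ψ + 2 * π / μ * ((k : ℝ) - 1))
      = -Real.sin (θ - π / μ) / Real.sin (π / μ) := by
    rw [hub, sum_Icc_shift (fun k => Real.cos (ψ + 2 * π / μ * ((k : ℝ) - 1))) m N]
    have heq : ∀ j ∈ Finset.range N,
        Real.cos (ψ + 2 * π / μ * (((m + 1 + (j:ℤ)) : ℤ) - 1 : ℝ)) = Real.cos (θ + j * δ) := by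
      intro j _
      congr 1
      rw [hθ, hδ]; push_cast; ring
    rw [Finset.sum_congr rfl (by exact_mod_cast heq)]
    have hkey := sum_cos_mul θ δ N
    rw [hNδ] at hkey
    have hsin2 : Real.sin (θ + π - δ / 2) = - Real.sin (θ - δ / 2) := by
      have : θ + π - δ / 2 = (θ - δ / 2) + π := by ring
      rw [this, Real.sin_add_pi]
    rw [hsin2, hδ2] at hkey
    have h2s : (2 : ℝ) * Real.sin (π / μ) ≠ 0 := by positivity
    rw [eq_div_iff (ne_of_gt hsin)]
    linear_combination hkey / 2
  -- relate θ - π/μ and the cosine argument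
  have hψeq : ψ = 3 * π / 2 - 2 * π * t := by
    have hπ0 : (2 : ℝ) * π ≠ 0 := by positivity
    field_simp [ht]
    rw [ht]; field_simp; ring
  set y : ℝ := -(2 * π * t) - π / μ + 2 * π / μ * (m : ℝ) with hy
  have harg : θ - π / μ = y + π + π / 2 := by
    rw [hθ, hδ, hy, hψeq]; ring
  have hsy : Real.sin (θ - π / μ) = - Real.cos y := by
    rw [harg]
    rw [show y + π + π / 2 = (y + π) + π / 2 from by ring, Real.sin_add_pi_div_two,
      Real.cos_add_pi]
  have harg2 : ψ - π / μ + 2 * π / μ * (m : ℝ) = θ - π / μ := by rw [hθ, hδ]; ring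
  constructor
  · rw [harg2]; exact hsum
  · rw [hsum, hsy]
    have hW0 : (0:ℝ) < W := by exact_mod_cast hW
    have hV0 : V ≠ 0 := by rw [hV]; positivity
    rw [hV]
    field_simp
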